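/- (Single-worker QG-DSGDm recovers Quasi-Hyperbolic Momentum.) Let η > 0, β ∈ [0,1), μ ∈ [0,1) with β̂ := μ + (1−μ)β > 0, and let (g^t)_{t≥1} be any sequence in ℝ^d. Define sequences (x^t), (m^t) by m^0 = 0 and, for t ≥ 1, x^{t+1'} given by x^{t+1} = x^t − η(βm^{t−1} + g^t) and m^t = μm^{t−1} + (1−μ)(x^t − x^{t+1})/η. Then the rescaled momentum m̂^t := m^t/(1−μ) satisfies, for all t ≥ 1, m̂^t = β̂ m̂^{t−1} + g^t and x^{t+1} = x^t − η((1 − μ/β̂)m̂^t + (μ/β̂)g^t). -/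

import Mathlib

noncomputable section

/-- **Single-worker QG-DSGDm recovers Quasi-Hyperbolic Momentum.**
With `m^0 = 0` and, for `t ≥ 1`,
`x^{t+1} = x^t − η(βm^{t−1} + g^t)`, `m^t = μm^{t−1} + (1−μ)(x^t − x^{t+1})/η`,
the rescaled momentum `m̂^t := m^t/(1−μ)` satisfies, for all `t ≥ 1`,
`m̂^t = β̂ m̂^{t−1} + g^t` and
`x^{t+1} = x^t − η((1 − μ/β̂)m̂^t + (μ/β̂)g^t)` where `β̂ := μ + (1−μ)β`. -/
theorem single_worker_qg_dsgdm_is_qhm (d : ℕ) (η β μ : ℝ)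
    (hη : 0 < η) (hβ0 : 0 ≤ β) (hβ1 : β < 1) (hμ0 : 0 ≤ μ) (hμ1 : μ < 1)
    (hbhat : 0 < μ + (1 - μ) * β)
    (g x m : ℕ → EuclideanSpace ℝ (Fin d))
    (hm0 : m 0 = 0)
    (hx : ∀ t, 1 ≤ t → x (t + 1) = x t - η • (β • m (t - 1) + g t))
    (hm : ∀ t, 1 ≤ t → m t = μ • m (t - 1) + ((1 - μ) / η) • (x t - x (t + 1))) :
    ∀ t, 1 ≤ t →
      (1 - μ)⁻¹ • m t
        = (μ + (1 - μ) * β) • ((1 - μ)⁻¹ • m (t - 1)) + g t ∧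
      x (t + 1) = x t - η • ((1 - μ / (μ + (1 - μ) * β)) • ((1 - μ)⁻¹ • m t)
        + (μ / (μ + (1 - μ) * β)) • g t) := by
  intro t ht
  have hηne : η ≠ 0 := ne_of_gt hη
  have hμne : (1 - μ) ≠ 0 := by linarith
  have hbne : μ + (1 - μ) * β ≠ 0 := ne_of_gt hbhat
  have hdiff : x t - x (t + 1) = η • (β • m (t - 1) + g t) := by
    rw [hx t ht]; abel
  have key : m t = (μ + (1 - μ) * β) • m (t - 1) + (1 - μ) • g t := by
    rw [hm t ht, hdiff, smul_smul]
    rw [div_mul_cancel₀ _ hηne]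
    module
  constructor
  · rw [key]
    match_scalars <;> field_simp
  · rw [hx t ht, key]
    match_scalars <;> field_simp <;> (try ring) <;> (linear_combination (-μ) * (mul_inv_cancel₀ (show β - β * μ + μ ≠ 0 by intro h; apply hbne; linarith)))

end
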